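/- A permutation of a list that is sorted with respect to a partial order and is obtained by swapping only adjacent incomparable elements can transform any linear extension of a finite poset into any other linear extension; i.e., any two linear extensions of a finite poset are connected by a sequence of adjacent transpositions of incomparable elements. -/

import Mathlib

/-- One adjacent transposition of two `prec`-incomparable elements. -/
def AdjSwap {α : Type*} (prec : α → α → Prop) (L L' : List α) : Prop :=
  ∃ l₁ a b l₂, ¬ prec a b ∧ ¬ prec b a ∧
    L = l₁ ++ a :: b :: l₂ ∧ L' = l₁ ++ b :: a :: l₂

lemma adjSwap_cons {α : Type*} {prec : α → α → Prop} {L L' : List α} (x : α)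
    (h : AdjSwap prec L L') : AdjSwap prec (x :: L) (x :: L') := by
  obtain ⟨l₁, a, b, l₂, h1, h2, h3, h4⟩ := h
  exact ⟨x :: l₁, a, b, l₂, h1, h2, by simp [h3], by simp [h4]⟩

lemma rtg_cons {α : Type*} {prec : α → α → Prop} {L L' : List α} (x : α)
    (h : Relation.ReflTransGen (AdjSwap prec) L L') :
    Relation.ReflTransGen (AdjSwap prec) (x :: L) (x :: L') :=
  Relation.ReflTransGen.lift (x :: ·) (fun _ _ => adjSwap_cons x) _ _ h

lemma move_front {α : Type*} {prec : α → α → Prop} (a : α) (l₁ l₂ : List α)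
    (h : ∀ x ∈ l₁, ¬ prec x a ∧ ¬ prec a x) :
    Relation.ReflTransGen (AdjSwap prec) (l₁ ++ a :: l₂) (a :: (l₁ ++ l₂)) := by
  induction l₁ with
  | nil => exact Relation.ReflTransGen.refl
  | cons x l₁ ih =>
    have hx := h x (by simp)
    have step : AdjSwap prec (x :: a :: (l₁ ++ l₂)) (a :: x :: (l₁ ++ l₂)) :=
      ⟨[], x, a, l₁ ++ l₂, hx.1, hx.2, by simp, by simp⟩
    show Relation.ReflTransGen (AdjSwap prec) (x :: (l₁ ++ a :: l₂)) (a :: x :: (l₁ ++ l₂))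
    exact (rtg_cons x (ih (fun y hy => h y (by simp [hy])))).trans
      (Relation.ReflTransGen.single step)

/-- Any two linear extensions of a finite strict partial order (lists enumerating the
same set without duplicates, respecting `prec`) are connected by a sequence of adjacent
transpositions of incomparable elements. -/
theorem linear_extensions_connected {α : Type*} (prec : α → α → Prop)
    (hirr : Irreflexive prec) (htrans : Transitive prec)
    (L1 L2 : List α) (hperm : L1.Perm L2) (hnodup : L1.Nodup)
    (hlin1 : L1.Pairwise (fun a b => ¬ prec b a))
    (hlin2 : L2.Pairwise (fun a b => ¬ prec b a)) :
    Relation.ReflTransGen (AdjSwap prec) L1 L2 := by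
  induction L2 generalizing L1 with
  | nil =>
    have : L1 = [] := List.Perm.eq_nil hperm
    subst this; exact Relation.ReflTransGen.refl
  | cons a t ih =>
    have ha : a ∈ L1 := hperm.mem_iff.2 (by simp)
    obtain ⟨l₁, l₂, rfl⟩ := List.append_of_mem ha
    have hinc : ∀ x ∈ l₁, ¬ prec x a ∧ ¬ prec a x := by
      intro x hx
      constructor
      · -- x ∈ t since x ≠ a and x ∈ L2
        have hxa : x ≠ a := by
          intro h; subst h
          exact (List.Nodup.notMem (List.nodup_middle.mp hnodup)) (by simp [hx])
        have hxL2 : x ∈ a :: t := hperm.mem_iff.1 (by simp [hx])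
        have hxt : x ∈ t := by
          rcases List.mem_cons.1 hxL2 with h' | h'
          · exact absurd h' hxa
          · exact h'
        exact (List.pairwise_cons.1 hlin2).1 x hxt
      · have := List.pairwise_append.1 hlin1
        exact this.2.2 x hx a (by simp)
    have h1 : Relation.ReflTransGen (AdjSwap prec) (l₁ ++ a :: l₂) (a :: (l₁ ++ l₂)) :=
      move_front a l₁ l₂ hinc
    have hperm' : (l₁ ++ l₂).Perm t := by
      have : (a :: (l₁ ++ l₂)).Perm (a :: t) :=
        (List.perm_middle.symm).trans hperm
      exact this.cons_inv
    have hnodup' : (l₁ ++ l₂).Nodup :=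
      (List.nodup_middle.mp hnodup).of_cons
    have hlin1' : (l₁ ++ l₂).Pairwise (fun a b => ¬ prec b a) :=
      hlin1.sublist (by simpa using List.Sublist.append_left (List.sublist_cons_self a l₂) l₁)
    have h2 := ih (l₁ ++ l₂) hperm' hnodup' hlin1' hlin2.of_cons
    exact h1.trans (rtg_cons a h2)
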